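/- arXiv:2512.19988 — 2 statements merged into one kernel-verified Lean document; each statement's English description precedes it below -/
import Mathlib

section
/- There exists a constant C > 0, depending only on d, μ and ψ, such that for every f ∈ C(Ω), every 0 < h < 1 and every x ∈ Ω, the pointwise bound |f(x) − f_min(x)| ≤ C ω_f(h) holds. (Pointwise bias estimate proved inside Theorem 3.2.) -/
open MeasureTheory ProbabilityTheory Real
open scoped ENNReal

/-- The scaled kernel `ψ_h(x) = h^{-d} ψ(x/h)`. -/
noncomputable def psih {d : ℕ} (ψ : EuclideanSpace ℝ (Fin d) → ℝ) (h : ℝ)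
    (x : EuclideanSpace ℝ (Fin d)) : ℝ :=
  (h ^ d)⁻¹ * ψ (h⁻¹ • x)

/-- Modulus of continuity of `f` on `Ω`. -/
noncomputable def modulus {d : ℕ} (Ω : Set (EuclideanSpace ℝ (Fin d)))
    (f : EuclideanSpace ℝ (Fin d) → ℝ) (t : ℝ) : ℝ :=
  sSup {v : ℝ | ∃ x ∈ Ω, ∃ y ∈ Ω, dist x y ≤ t ∧ v = |f x - f y|}

/-- Sup norm of `f` over `Ω`. -/
noncomputable def supNorm {d : ℕ} (Ω : Set (EuclideanSpace ℝ (Fin d)))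
    (f : EuclideanSpace ℝ (Fin d) → ℝ) : ℝ :=
  sSup {v : ℝ | ∃ x ∈ Ω, v = |f x|}

/-- Assumption (A2): the Fourier transform of the measure `μs` is `L¹` on `ℝ^d`. -/
def FourierL1 {d : ℕ} (μs : Measure (EuclideanSpace ℝ (Fin d))) : Prop :=
  Integrable (fun ξ : EuclideanSpace ℝ (Fin d) =>
    ∫ t, Complex.exp (-(Complex.I) * ((inner ℝ t ξ : ℝ) : ℂ)) ∂μs) volume

section Aux

open Complex Filter Metric
open scoped RealInnerProductSpace

variable {d : ℕ}

lemma gauss_rep (a : ℝ) (ha : 0 < a) (w : EuclideanSpace ℝ (Fin d)) :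
    ∫ ξ : EuclideanSpace ℝ (Fin d),
      Complex.exp (-(1/(4*a) : ℝ) * ‖ξ‖^2 + (-Complex.I) * (⟪w, ξ⟫ : ℝ))
    = ((4*a*π : ℝ) ^ ((d:ℝ)/2) : ℝ) * Complex.exp (-(a:ℝ) * ‖w‖^2) := by
  have hb : (0:ℝ) < ((((1:ℝ)/(4*a) : ℝ)) : ℂ).re := by
    simp only [Complex.ofReal_re]; positivity
  have H := GaussianFourier.integral_cexp_neg_mul_sq_norm_add
    (V := EuclideanSpace ℝ (Fin d)) hb (-Complex.I) w
  rw [finrank_euclideanSpace_fin] at H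
  rw [H]
  have h1 : (π / ((((1:ℝ)/(4*a)) : ℝ) : ℂ)) = ((4*a*π : ℝ) : ℂ) := by
    have : ((a:ℝ) : ℂ) ≠ 0 := by exact_mod_cast ha.ne'
    push_cast
    field_simp
  rw [h1]
  have h2 : ((-Complex.I) ^ 2 * (‖w‖:ℂ) ^ 2 / (4 * ((((1:ℝ)/(4*a)):ℝ) : ℂ))) = ((-(a:ℝ) * ‖w‖^2 : ℝ) : ℂ) := by
    have ha' : ((a:ℝ) : ℂ) ≠ 0 := by exact_mod_cast ha.ne'
    have hi : (-Complex.I) ^ 2 = -1 := by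
      rw [neg_pow]; simp [Complex.I_sq]
    rw [hi]
    push_cast
    field_simp
  rw [h2]
  congr 1
  · rw [Complex.ofReal_cpow (by positivity)]
    push_cast
    norm_num
  · push_cast
    ring_nf


lemma gauss_fourier_bound (ν : Measure (EuclideanSpace ℝ (Fin d))) [IsFiniteMeasure ν]
    (hφ : Integrable (fun ξ : EuclideanSpace ℝ (Fin d) =>
      ∫ t, Complex.exp (-(Complex.I) * ((inner ℝ t ξ : ℝ) : ℂ)) ∂ν) volume)
    {a : ℝ} (ha : 0 < a) (v : EuclideanSpace ℝ (Fin d)) :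
    (4*a*π : ℝ) ^ ((d:ℝ)/2) * ∫ x, rexp (-a * ‖x - v‖^2) ∂ν ≤
      ∫ ξ : EuclideanSpace ℝ (Fin d),
        ‖∫ t, Complex.exp (-(Complex.I) * ((inner ℝ t ξ : ℝ) : ℂ)) ∂ν‖ := by
  classical
  set φ : EuclideanSpace ℝ (Fin d) → ℂ :=
    fun ξ => ∫ t, Complex.exp (-(Complex.I) * ((inner ℝ t ξ : ℝ) : ℂ)) ∂ν with hφdef
  set c₄ : ℝ := (4*a*π : ℝ) ^ ((d:ℝ)/2) with hc₄
  have hc₄pos : 0 < c₄ := by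
    apply Real.rpow_pos_of_pos; positivity
  set F : EuclideanSpace ℝ (Fin d) → EuclideanSpace ℝ (Fin d) → ℂ := fun x ξ =>
    Complex.exp (-(1/(4*a) : ℝ) * ‖ξ‖^2 + (-Complex.I) * ((⟪x - v, ξ⟫ : ℝ) : ℂ)) with hF
  have hb : (0:ℝ) < ((((1:ℝ)/(4*a) : ℝ)) : ℂ).re := by
    simp only [Complex.ofReal_re]; positivity
  have hFcont : Continuous (Function.uncurry F) := by
    apply Complex.continuous_exp.comp
    apply Continuous.add
    · fun_prop
    · apply Continuous.mul continuous_const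
      apply Complex.continuous_ofReal.comp
      exact Continuous.inner (continuous_fst.sub continuous_const) continuous_snd
  have hFnorm : ∀ x ξ, ‖F x ξ‖ = rexp (-(1/(4*a)) * ‖ξ‖^2) := by
    intro x ξ
    rw [hF]
    simp only [Complex.norm_exp]
    congr 1
    simp only [Complex.add_re, Complex.neg_re, Complex.mul_re, Complex.ofReal_re,
      Complex.ofReal_im, Complex.I_re, Complex.I_im, Complex.neg_im, ← Complex.ofReal_pow]
    ring
  have hFint : ∀ x, Integrable (F x) volume := by
    intro x
    exact GaussianFourier.integrable_cexp_neg_mul_sq_norm_add hb (-Complex.I) (x - v)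
  have hGint : Integrable (fun ξ : EuclideanSpace ℝ (Fin d) =>
      rexp (-(1/(4*a)) * ‖ξ‖^2)) volume := by
    have h := (hFint v).norm
    simpa only [hFnorm] using h
  have hFprod : Integrable (Function.uncurry F) (ν.prod volume) := by
    rw [integrable_prod_iff hFcont.aestronglyMeasurable]
    constructor
    · exact Eventually.of_forall fun x => hFint x
    · have : (fun x => ∫ y, ‖Function.uncurry F (x, y)‖ ∂(volume : Measure (EuclideanSpace ℝ (Fin d)))) =
          fun _ => ∫ ξ : EuclideanSpace ℝ (Fin d), rexp (-(1/(4*a)) * ‖ξ‖^2) := by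
        funext x
        simp only [Function.uncurry_apply_pair]
        congr 1; funext ξ; exact hFnorm x ξ
      rw [this]
      exact integrable_const _
  -- main identity
  have claim : (c₄ : ℂ) * ((∫ x, rexp (-a * ‖x - v‖^2) ∂ν : ℝ) : ℂ) =
      ∫ ξ, Complex.exp (-(1/(4*a) : ℝ) * ‖ξ‖^2) *
        (Complex.exp (Complex.I * ((⟪v, ξ⟫ : ℝ) : ℂ)) * φ ξ) := by
    have e1 : ((∫ x, rexp (-a * ‖x - v‖^2) ∂ν : ℝ) : ℂ)
        = ∫ x, Complex.exp (-(a:ℝ) * ‖x - v‖^2) ∂ν := by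
      have : (fun x => Complex.exp (-(a:ℝ) * ‖x - v‖^2)) =
          fun x : EuclideanSpace ℝ (Fin d) => ((rexp (-a * ‖x - v‖^2) : ℝ) : ℂ) := by
        funext x
        rw [Complex.ofReal_exp]
        push_cast; ring_nf
      rw [this]
      exact (integral_ofReal (𝕜 := ℂ) (f := fun x => rexp (-a * ‖x - v‖^2)) (μ := ν)).symm
    rw [e1, ← integral_const_mul]
    have e2 : ∀ x : EuclideanSpace ℝ (Fin d),
        (c₄ : ℂ) * Complex.exp (-(a:ℝ) * ‖x - v‖^2) = ∫ ξ, F x ξ := by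
      intro x
      rw [hc₄]
      exact (gauss_rep a ha (x - v)).symm
    rw [integral_congr_ae (Eventually.of_forall e2)]
    rw [integral_integral_swap hFprod]
    congr 1; funext ξ
    have e3 : ∀ x : EuclideanSpace ℝ (Fin d), F x ξ =
        Complex.exp (-(1/(4*a) : ℝ) * ‖ξ‖^2) *
          (Complex.exp (Complex.I * ((⟪v, ξ⟫ : ℝ) : ℂ)) *
            Complex.exp (-(Complex.I) * ((⟪x, ξ⟫ : ℝ) : ℂ))) := by
      intro x
      simp only [hF]
      rw [inner_sub_left]
      push_cast
      rw [Complex.exp_add, mul_sub, sub_eq_add_neg, Complex.exp_add]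
      ring_nf
    rw [integral_congr_ae (Eventually.of_forall e3), integral_const_mul, integral_const_mul]
  -- take norms
  have hnn : 0 ≤ ∫ x, rexp (-a * ‖x - v‖^2) ∂ν :=
    integral_nonneg fun x => (Real.exp_pos _).le
  have lhs_eq : c₄ * ∫ x, rexp (-a * ‖x - v‖^2) ∂ν =
      ‖(c₄ : ℂ) * ((∫ x, rexp (-a * ‖x - v‖^2) ∂ν : ℝ) : ℂ)‖ := by
    rw [norm_mul, Complex.norm_real, Complex.norm_real]
    rw [Real.norm_of_nonneg hc₄pos.le, Real.norm_of_nonneg hnn]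
  rw [lhs_eq, claim]
  apply norm_integral_le_of_norm_le hφ.norm
  apply Eventually.of_forall
  intro ξ
  rw [norm_mul, norm_mul]
  simp only [Complex.norm_exp]
  have h1 : ((-((1/(4*a) : ℝ) : ℂ)) * (‖ξ‖:ℂ)^2).re = -(1/(4*a)) * ‖ξ‖^2 := by
    simp only [Complex.neg_re, Complex.mul_re, Complex.ofReal_re, Complex.ofReal_im,
      ← Complex.ofReal_pow]
    ring
  have h2 : (Complex.I * ((⟪v, ξ⟫ : ℝ) : ℂ)).re = 0 := by
    simp [Complex.mul_re]
  rw [h1, h2, Real.exp_zero, one_mul]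
  apply mul_le_of_le_one_left (norm_nonneg _)
  rw [Real.exp_le_one_iff]
  have : (0:ℝ) ≤ (1/(4*a)) * ‖ξ‖^2 := by positivity
  linarith


lemma nu_le_smul_volume (ν : Measure (EuclideanSpace ℝ (Fin d))) [IsFiniteMeasure ν]
    (hgb : ∀ a : ℝ, 0 < a → ∀ v : EuclideanSpace ℝ (Fin d),
      (4*a*π : ℝ) ^ ((d:ℝ)/2) * ∫ x, rexp (-a * ‖x - v‖^2) ∂ν ≤ Φ) (hΦ : 0 ≤ Φ) :
    ∃ K : ℝ, 0 ≤ K ∧ ∀ s : Set (EuclideanSpace ℝ (Fin d)),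
      ν s ≤ ENNReal.ofReal K * volume s := by
  classical
  set K₀ : ℝ := Real.exp 1 * Φ / (4*π : ℝ) ^ ((d:ℝ)/2) with hK₀
  have h4π : (0:ℝ) < (4*π : ℝ) ^ ((d:ℝ)/2) := Real.rpow_pos_of_pos (by positivity) _
  have hK₀nn : 0 ≤ K₀ := by positivity
  set vB : ℝ := (volume (closedBall (0:EuclideanSpace ℝ (Fin d)) 1)).toReal with hvB
  have hvBpos : 0 < vB := by
    rw [hvB]
    apply ENNReal.toReal_pos
    · exact (measure_closedBall_pos volume _ one_pos).ne'
    · exact measure_closedBall_lt_top.ne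
  refine ⟨K₀ / vB, by positivity, ?_⟩
  -- ball bound
  have ball_bd : ∀ (v : EuclideanSpace ℝ (Fin d)) (r : ℝ), 0 < r →
      ν (closedBall v r) ≤ ENNReal.ofReal (K₀ / vB) * volume (closedBall v r) := by
    intro v r hr
    set a : ℝ := (r^2)⁻¹ with ha'
    have ha : 0 < a := by positivity
    have hint : Integrable (fun x => rexp (-a * ‖x - v‖^2)) ν := by
      apply Integrable.mono' (integrable_const (1:ℝ))
      · apply Continuous.aestronglyMeasurable
        fun_prop
      · apply Eventually.of_forall
        intro x
        rw [Real.norm_of_nonneg (Real.exp_pos _).le, Real.exp_le_one_iff]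
        have : 0 ≤ a * ‖x - v‖^2 := by positivity
        linarith
    have step1 : Real.exp (-1) * (ν (closedBall v r)).toReal ≤
        ∫ x, rexp (-a * ‖x - v‖^2) ∂ν := by
      have e0 : ∫ x in closedBall v r, rexp (-1) ∂ν
          = Real.exp (-1) * (ν (closedBall v r)).toReal := by
        rw [setIntegral_const, smul_eq_mul]; exact mul_comm _ _
      rw [← e0]
      have step1a : ∫ x in closedBall v r, rexp (-1) ∂ν ≤
          ∫ x in closedBall v r, rexp (-a * ‖x - v‖^2) ∂ν := by
        apply setIntegral_mono_on (integrableOn_const (measure_lt_top ν _).ne)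
          (hint.integrableOn) measurableSet_closedBall
        intro x hx
        apply Real.exp_le_exp.2
        rw [mem_closedBall, dist_eq_norm] at hx
        have h1 : ‖x - v‖^2 ≤ r^2 := by
          apply sq_le_sq' _ hx
          nlinarith [norm_nonneg (x - v)]
        have := (mul_le_mul_of_nonneg_left h1 ha.le)
        rw [ha'] at this ⊢
        have hr2 : (r^2)⁻¹ * r^2 = 1 := inv_mul_cancel₀ (by positivity)
        nlinarith
      apply step1a.trans
      apply setIntegral_le_integral hint
      exact Eventually.of_forall fun x => (Real.exp_pos _).le
    have step2 : ∫ x, rexp (-a * ‖x - v‖^2) ∂ν ≤ Φ / (4*a*π : ℝ) ^ ((d:ℝ)/2) := by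
      rw [le_div_iff₀ (Real.rpow_pos_of_pos (by positivity) _)]
      rw [mul_comm]
      exact hgb a ha v
    -- convert c₄ with a = r⁻²
    have hc : ((4*a*π : ℝ)) ^ ((d:ℝ)/2) = (4*π : ℝ) ^ ((d:ℝ)/2) / r^d := by
      have h1 : (4*a*π : ℝ) = (4*π) / r^2 := by rw [ha']; field_simp
      rw [h1, Real.div_rpow (by positivity) (by positivity)]
      congr 1
      rw [← Real.rpow_natCast r 2, ← Real.rpow_natCast r d, ← Real.rpow_mul hr.le]
      congr 1
      field_simp; push_cast; ring
    have hrd : (0:ℝ) < r^d := by positivity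
    have toReal_bd : (ν (closedBall v r)).toReal ≤ (K₀ / vB) * (r^d * vB) := by
      have : (ν (closedBall v r)).toReal ≤ Real.exp 1 * (Φ / ((4*a*π : ℝ) ^ ((d:ℝ)/2))) := by
        have h2 := step1.trans step2
        have h3 := mul_le_mul_of_nonneg_left h2 (Real.exp_pos 1).le
        calc (ν (closedBall v r)).toReal
            = Real.exp 1 * (Real.exp (-1) * (ν (closedBall v r)).toReal) := by
              rw [← mul_assoc, ← Real.exp_add]; norm_num
          _ ≤ _ := h3
      apply this.trans
      rw [hc]
      have heq : K₀ / vB * (r^d * vB) = rexp 1 * (Φ * r ^ d / (4 * π) ^ ((d:ℝ) / 2)) := by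
        rw [hK₀]; field_simp
      rw [div_div_eq_mul_div]
      exact le_of_eq heq.symm
    have vol_eq : volume (closedBall v r) = ENNReal.ofReal (r^d * vB) := by
      rw [Measure.addHaar_closedBall' _ _ hr.le, finrank_euclideanSpace_fin,
        ENNReal.ofReal_mul (by positivity)]
      congr 1
      rw [hvB, ENNReal.ofReal_toReal measure_closedBall_lt_top.ne]
    rw [vol_eq, ← ENNReal.ofReal_mul (by positivity)]
    rw [ENNReal.le_ofReal_iff_toReal_le (measure_ne_top ν _) (by positivity)]
    exact toReal_bd
  -- Vitali upgrade
  intro s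
  have hloc : IsLocallyFiniteMeasure
      ((ENNReal.ofReal (K₀ / vB)) • (volume : Measure (EuclideanSpace ℝ (Fin d)))) := by
    constructor
    intro x
    refine ⟨Metric.ball x 1, Metric.ball_mem_nhds x one_pos, ?_⟩
    rw [Measure.smul_apply, smul_eq_mul]
    exact ENNReal.mul_lt_top ENNReal.ofReal_lt_top measure_ball_lt_top
  have := (Besicovitch.vitaliFamily ν).measure_le_of_frequently_le
    (ρ := ν) ((ENNReal.ofReal (K₀ / vB)) • (volume : Measure (EuclideanSpace ℝ (Fin d))))
    Measure.AbsolutelyContinuous.rfl s ?_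
  · simpa [Measure.smul_apply, smul_eq_mul] using this
  · intro x hx
    apply Eventually.frequently
    filter_upwards [VitaliFamily.eventually_filterAt_mem_setsAt _ x] with t ht
    obtain ⟨r, hr, rfl⟩ : ∃ r : ℝ, 0 < r ∧ closedBall x r = t := by
      simpa [Besicovitch.vitaliFamily] using ht
    rw [Measure.smul_apply, smul_eq_mul]
    exact ball_bd x r hr


variable {Ω : Set (EuclideanSpace ℝ (Fin d))} {f : EuclideanSpace ℝ (Fin d) → ℝ} {t : ℝ}

lemma bddAbove_modSet (hΩcpt : IsCompact Ω) (hf : ContinuousOn f Ω) :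
    BddAbove {v : ℝ | ∃ x ∈ Ω, ∃ y ∈ Ω, dist x y ≤ t ∧ v = |f x - f y|} := by
  obtain ⟨C, hC⟩ := hΩcpt.exists_bound_of_continuousOn hf
  refine ⟨2 * C, ?_⟩
  rintro v ⟨x, hx, y, hy, -, rfl⟩
  have h1 := hC x hx
  have h2 := hC y hy
  rw [Real.norm_eq_abs] at h1 h2
  have := abs_sub (f x) (f y)
  calc |f x - f y| ≤ |f x| + |f y| := abs_sub _ _
    _ ≤ 2 * C := by linarith

lemma abs_sub_le_modulus (hΩcpt : IsCompact Ω) (hf : ContinuousOn f Ω)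
    {x y : EuclideanSpace ℝ (Fin d)} (hx : x ∈ Ω) (hy : y ∈ Ω) (hd : dist x y ≤ t) :
    |f x - f y| ≤ modulus Ω f t :=
  le_csSup (bddAbove_modSet hΩcpt hf) ⟨x, hx, y, hy, hd, rfl⟩

lemma modulus_nonneg (hΩcpt : IsCompact Ω) (hf : ContinuousOn f Ω)
    {x : EuclideanSpace ℝ (Fin d)} (hx : x ∈ Ω) (ht : 0 ≤ t) :
    0 ≤ modulus Ω f t := by
  have := abs_sub_le_modulus hΩcpt hf hx hx (by simpa using ht)
  simpa using this

lemma modulus_chain (hΩcpt : IsCompact Ω) (hΩconv : Convex ℝ Ω) (hf : ContinuousOn f Ω)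
    {x y : EuclideanSpace ℝ (Fin d)} (hx : x ∈ Ω) (hy : y ∈ Ω) {h : ℝ} (hh : 0 < h) :
    |f x - f y| ≤ (1 + dist x y / h) * modulus Ω f h := by
  have hω : 0 ≤ modulus Ω f h := modulus_nonneg hΩcpt hf hx hh.le
  rcases eq_or_ne (dist x y) 0 with hd0 | hd0
  · rw [dist_eq_zero] at hd0
    subst hd0
    simp only [sub_self, abs_zero]
    positivity
  · have hdpos : 0 < dist x y := lt_of_le_of_ne dist_nonneg (Ne.symm hd0)
    set n : ℕ := ⌈dist x y / h⌉₊ with hn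
    have hnpos : 0 < n := Nat.ceil_pos.2 (div_pos hdpos hh)
    have hnR : (0:ℝ) < (n:ℝ) := by exact_mod_cast hnpos
    set z : ℕ → EuclideanSpace ℝ (Fin d) := fun k => x + ((k:ℝ)/(n:ℝ)) • (y - x) with hz
    have hz0 : z 0 = x := by simp [hz]
    have hzn : z n = y := by
      simp only [hz, div_self hnR.ne']
      module
    have hzΩ : ∀ k, k ≤ n → z k ∈ Ω := by
      intro k hk
      have hk1 : (k:ℝ)/(n:ℝ) ≤ 1 := by
        rw [div_le_one hnR]; exact_mod_cast hk
      have hk0 : (0:ℝ) ≤ (k:ℝ)/(n:ℝ) := by positivity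
      have : z k = (1 - (k:ℝ)/(n:ℝ)) • x + ((k:ℝ)/(n:ℝ)) • y := by
        simp only [hz]; module
      rw [this]
      exact hΩconv hx hy (by linarith) hk0 (by ring)
    have hdz : ∀ k : ℕ, dist (z k) (z (k+1)) ≤ h := by
      intro k
      have e : z k - z (k+1) = (-(1:ℝ)/(n:ℝ)) • (y - x) := by
        simp only [hz]
        push_cast
        module
      rw [dist_eq_norm, e, norm_smul]
      rw [Real.norm_eq_abs, abs_div, abs_neg, abs_one, Nat.abs_cast]
      rw [← dist_eq_norm] at *
      rw [dist_comm y x]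
      rw [div_mul_eq_mul_div, one_mul, div_le_iff₀ hnR]
      have := Nat.le_ceil (dist x y / h)
      rw [← hn] at this
      calc dist x y ≤ (n:ℝ) * h := by
            rw [div_le_iff₀ hh] at this; linarith
        _ = h * n := by ring
    have tele : f x - f y = ∑ k ∈ Finset.range n, (f (z k) - f (z (k+1))) := by
      rw [Finset.sum_range_sub' (fun k => f (z k)) n, hz0, hzn]
    have hsum : |f x - f y| ≤ (n:ℝ) * modulus Ω f h := by
      rw [tele]
      calc |∑ k ∈ Finset.range n, (f (z k) - f (z (k+1)))|
          ≤ ∑ k ∈ Finset.range n, |f (z k) - f (z (k+1))| :=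
            Finset.abs_sum_le_sum_abs _ _
        _ ≤ ∑ k ∈ Finset.range n, modulus Ω f h := by
            apply Finset.sum_le_sum
            intro k hk
            rw [Finset.mem_range] at hk
            exact abs_sub_le_modulus hΩcpt hf (hzΩ k hk.le) (hzΩ (k+1) hk) (hdz k)
        _ = (n:ℝ) * modulus Ω f h := by
            rw [Finset.sum_const, Finset.card_range, nsmul_eq_mul]
    apply hsum.trans
    apply mul_le_mul_of_nonneg_right _ hω
    have := Nat.ceil_lt_add_one (show (0:ℝ) ≤ dist x y / h by positivity)
    rw [← hn] at this
    linarith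


/-- Comparison lemma: integrals against `μs.restrict Ω` are dominated by `K` times
the Lebesgue integral. -/
lemma integral_restrict_le_smul_volume {Ω : Set (EuclideanSpace ℝ (Fin d))}
    (hΩm : MeasurableSet Ω) (ν : Measure (EuclideanSpace ℝ (Fin d))) [IsFiniteMeasure ν]
    {K : ℝ} (hK : 0 ≤ K)
    (hdom : ∀ s : Set (EuclideanSpace ℝ (Fin d)), ν s ≤ ENNReal.ofReal K * volume s)
    (g : EuclideanSpace ℝ (Fin d) → ℝ) (hg : Continuous g) (hgnn : ∀ y, 0 ≤ g y)
    (hgint : Integrable g volume) :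
    ∫ y in Ω, g y ∂ν ≤ K * ∫ y, g y := by
  have hle : ν ≤ (ENNReal.ofReal K) • (volume : Measure (EuclideanSpace ℝ (Fin d))) :=
    Measure.le_iff.2 fun s _ => by
      simpa [Measure.smul_apply, smul_eq_mul] using hdom s
  have hB : ∫⁻ y, ENNReal.ofReal (g y) ≠ ∞ := by
    have := hgint.hasFiniteIntegral
    rw [hasFiniteIntegral_iff_norm] at this
    have heq : ∀ y, ENNReal.ofReal (g y) = ENNReal.ofReal ‖g y‖ := by
      intro y; rw [Real.norm_of_nonneg (hgnn y)]
    simp_rw [heq]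
    exact this.ne
  have e1 : ∫ y in Ω, g y ∂ν = (∫⁻ y in Ω, ENNReal.ofReal (g y) ∂ν).toReal := by
    rw [integral_eq_lintegral_of_nonneg_ae (Eventually.of_forall hgnn)
      hg.aestronglyMeasurable.restrict]
  have e2 : ∫ y, g y = (∫⁻ y, ENNReal.ofReal (g y)).toReal := by
    rw [integral_eq_lintegral_of_nonneg_ae (Eventually.of_forall hgnn)
      hg.aestronglyMeasurable]
  rw [e1, e2]
  have hchain : ∫⁻ y in Ω, ENNReal.ofReal (g y) ∂ν ≤
      ENNReal.ofReal K * ∫⁻ y, ENNReal.ofReal (g y) := by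
    calc ∫⁻ y in Ω, ENNReal.ofReal (g y) ∂ν
        ≤ ∫⁻ y, ENNReal.ofReal (g y) ∂ν :=
          lintegral_mono' Measure.restrict_le_self le_rfl
      _ ≤ ∫⁻ y, ENNReal.ofReal (g y) ∂((ENNReal.ofReal K) • (volume : Measure _)) :=
          lintegral_mono' hle le_rfl
      _ = ENNReal.ofReal K * ∫⁻ y, ENNReal.ofReal (g y) := by
          rw [lintegral_smul_measure, smul_eq_mul]
  calc (∫⁻ y in Ω, ENNReal.ofReal (g y) ∂ν).toReal
      ≤ (ENNReal.ofReal K * ∫⁻ y, ENNReal.ofReal (g y)).toReal := by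
        apply ENNReal.toReal_mono _ hchain
        exact ENNReal.mul_ne_top ENNReal.ofReal_ne_top hB
    _ = K * (∫⁻ y, ENNReal.ofReal (g y)).toReal := by
        rw [ENNReal.toReal_mul, ENNReal.toReal_ofReal hK]

/-- Integral of the scaled kernel. -/
lemma psih_facts {ψ : EuclideanSpace ℝ (Fin d) → ℝ} (hψInt : Integrable ψ volume)
    (hψint : ∫ x, ψ x = 1) {h : ℝ} (hh : 0 < h) (x : EuclideanSpace ℝ (Fin d)) :
    Integrable (fun y => psih ψ h (x - y)) volume ∧
      ∫ y, psih ψ h (x - y) = 1 := by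
  have hsmul : Integrable (fun z : EuclideanSpace ℝ (Fin d) => ψ (h⁻¹ • z)) volume :=
    hψInt.comp_smul (inv_ne_zero hh.ne')
  have hInt : Integrable (psih ψ h) volume := by
    have := hsmul.const_mul ((h ^ d)⁻¹)
    exact this
  constructor
  · exact (integrable_comp_sub_left (psih ψ h) x).2 hInt
  · rw [integral_sub_left_eq_self (psih ψ h) volume x]
    unfold psih
    rw [integral_const_mul]
    rw [Measure.integral_comp_smul volume ψ h⁻¹]
    rw [finrank_euclideanSpace_fin, hψint]
    rw [smul_eq_mul, mul_one]
    rw [_root_.abs_of_nonneg (show (0:ℝ) ≤ (h⁻¹ ^ d)⁻¹ by positivity)]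
    rw [inv_pow, inv_inv]
    rw [inv_mul_cancel₀ (by positivity)]

/-- Integral of the first moment of the scaled kernel. -/
lemma psih_moment {ψ : EuclideanSpace ℝ (Fin d) → ℝ} (hψnn : ∀ z, 0 ≤ ψ z)
    (hψmom : Integrable (fun z : EuclideanSpace ℝ (Fin d) => ‖z‖ * ψ z) volume)
    {h : ℝ} (hh : 0 < h) (x : EuclideanSpace ℝ (Fin d)) :
    Integrable (fun y => ‖x - y‖ * psih ψ h (x - y)) volume ∧
      ∫ y, ‖x - y‖ * psih ψ h (x - y) = h * ∫ z, ‖z‖ * ψ z := by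
  have key : ∀ z : EuclideanSpace ℝ (Fin d),
      ‖z‖ * psih ψ h z = (h ^ d)⁻¹ * h * (‖h⁻¹ • z‖ * ψ (h⁻¹ • z)) := by
    intro z
    unfold psih
    rw [norm_smul, Real.norm_eq_abs, _root_.abs_of_nonneg (by positivity : (0:ℝ) ≤ h⁻¹)]
    field_simp
  have hsmul : Integrable
      (fun z : EuclideanSpace ℝ (Fin d) => ‖h⁻¹ • z‖ * ψ (h⁻¹ • z)) volume := by
    exact (hψmom.comp_smul (R := h⁻¹) (inv_ne_zero hh.ne'))
  have hInt : Integrable (fun z : EuclideanSpace ℝ (Fin d) => ‖z‖ * psih ψ h z) volume := by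
    have := hsmul.const_mul ((h ^ d)⁻¹ * h)
    apply this.congr
    apply Eventually.of_forall
    intro z
    exact (key z).symm
  constructor
  · exact (integrable_comp_sub_left (fun z => ‖z‖ * psih ψ h z) x).2 hInt
  · rw [integral_sub_left_eq_self (fun z => ‖z‖ * psih ψ h z) volume x]
    have e : ∫ z, ‖z‖ * psih ψ h z
        = ∫ z : EuclideanSpace ℝ (Fin d), (h ^ d)⁻¹ * h * (‖h⁻¹ • z‖ * ψ (h⁻¹ • z)) := by
      congr 1; funext z; exact key z
    rw [e, integral_const_mul]
    rw [Measure.integral_comp_smul volume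
      (fun z : EuclideanSpace ℝ (Fin d) => ‖z‖ * ψ z) h⁻¹]
    rw [finrank_euclideanSpace_fin, smul_eq_mul]
    rw [_root_.abs_of_nonneg (show (0:ℝ) ≤ (h⁻¹ ^ d)⁻¹ by positivity), inv_pow, inv_inv]
    field_simp

end Aux

/-- pointwise bias estimate in the proof of Theorem 3.2: there is `C > 0`
depending only on `d, μ, ψ` such that for every continuous `f`, every `0 < h < 1` and
every `x ∈ Ω`, `|f(x) − f_min(x)| ≤ C ω_f(h)`. -/
theorem stmt_4
    (d : ℕ) (hd : 1 ≤ d)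
    (Ω : Set (EuclideanSpace ℝ (Fin d)))
    (hΩcpt : IsCompact Ω) (hΩconv : Convex ℝ Ω) (hΩint : (interior Ω).Nonempty)
    (μ : Measure (EuclideanSpace ℝ (Fin d))) [IsProbabilityMeasure μ]
    (hμΩ : μ Ωᶜ = 0)
    (C₁ : ℝ) (hC₁ : 0 < C₁)
    (hA1 : ∀ x ∈ Ω, ∀ α : ℝ, 0 < α → α ≤ 1 →
      ENNReal.ofReal C₁ * volume (Metric.closedBall x α) ≤ μ (Ω ∩ Metric.closedBall x α))
    (hA2 : ∃ μs : Measure (EuclideanSpace ℝ (Fin d)),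
      IsFiniteMeasure μs ∧ μs.restrict Ω = μ ∧ FourierL1 μs)
    (ψ : EuclideanSpace ℝ (Fin d) → ℝ)
    (hψcont : Continuous ψ) (hψbdd : ∃ M, ∀ x, ψ x ≤ M) (hψpos : ∀ x, 0 ≤ ψ x)
    (hψint : ∫ x, ψ x = 1)
    (hψmom : Integrable (fun x : EuclideanSpace ℝ (Fin d) => ‖x‖ * ψ x) volume)
    (Cψ : ℝ) (hCψ : 0 < Cψ)
    (hψlb : ∀ x : EuclideanSpace ℝ (Fin d), ‖x‖ ≤ 1 → Cψ ≤ ψ x) :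
    ∃ C > 0, ∀ f : EuclideanSpace ℝ (Fin d) → ℝ, ContinuousOn f Ω →
      ∀ h : ℝ, 0 < h → h < 1 → ∀ x ∈ Ω,
        |f x - (∫ y in Ω, f y * psih ψ h (x - y) ∂μ) /
            (∫ t in Ω, psih ψ h (x - t) ∂μ)| ≤ C * modulus Ω f h := by
  classical
  obtain ⟨μs, hμsfin, hμsres, hμsL1⟩ := hA2
  haveI := hμsfin
  have hΩm : MeasurableSet Ω := hΩcpt.isClosed.measurableSet
  -- Fourier constant
  set Φ : ℝ := ∫ ξ : EuclideanSpace ℝ (Fin d),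
    ‖∫ t, Complex.exp (-(Complex.I) * ((inner ℝ t ξ : ℝ) : ℂ)) ∂μs‖ with hΦdef
  have hΦnn : 0 ≤ Φ := integral_nonneg fun ξ => norm_nonneg _
  obtain ⟨K, hKnn, hdom⟩ := nu_le_smul_volume (Φ := Φ) μs
    (fun a ha v => gauss_fourier_bound μs hμsL1 ha v) hΦnn
  -- ψ facts
  have hψInt : Integrable ψ volume := by
    by_contra hc
    rw [integral_undef hc] at hψint
    norm_num at hψint
  obtain ⟨M, hM⟩ := hψbdd
  set Mψ : ℝ := ∫ z : EuclideanSpace ℝ (Fin d), ‖z‖ * ψ z with hMψdef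
  have hMψnn : 0 ≤ Mψ := integral_nonneg fun z => mul_nonneg (norm_nonneg _) (hψpos _)
  set vB : ℝ := (volume (Metric.closedBall (0:EuclideanSpace ℝ (Fin d)) 1)).toReal with hvB
  have hvBpos : 0 < vB := by
    rw [hvB]
    apply ENNReal.toReal_pos
    · exact (Metric.measure_closedBall_pos volume _ one_pos).ne'
    · exact measure_closedBall_lt_top.ne
  set c₀ : ℝ := Cψ * C₁ * vB with hc₀def
  have hc₀pos : 0 < c₀ := by positivity
  refine ⟨(K * (1 + Mψ) + 1) / c₀, by positivity, ?_⟩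
  intro f hf h hh0 hh1 x hx
  have hω : 0 ≤ modulus Ω f h := modulus_nonneg hΩcpt hf hx hh0.le
  -- kernel facts
  have hker := psih_facts hψInt hψint hh0 x
  have hmom := psih_moment hψpos hψmom hh0 x
  have hpnn : ∀ z, 0 ≤ psih ψ h z := fun z =>
    mul_nonneg (by positivity) (hψpos _)
  have hpcont : Continuous (fun t : EuclideanSpace ℝ (Fin d) => psih ψ h (x - t)) := by
    unfold psih
    fun_prop
  have hpbdd : ∀ t : EuclideanSpace ℝ (Fin d), ‖psih ψ h (x - t)‖ ≤ (h ^ d)⁻¹ * M := by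
    intro t
    rw [Real.norm_of_nonneg (hpnn _)]
    unfold psih
    apply mul_le_mul_of_nonneg_left (hM _) (by positivity)
  have hpint : Integrable (fun t => psih ψ h (x - t)) μ := by
    apply Integrable.mono' (integrable_const ((h ^ d)⁻¹ * M))
      hpcont.aestronglyMeasurable
    exact Filter.Eventually.of_forall hpbdd
  -- denominator lower bound
  set D : ℝ := ∫ t in Ω, psih ψ h (x - t) ∂μ with hDdef
  have hDlb : c₀ ≤ D := by
    have hsub : Ω ∩ Metric.closedBall x h ⊆ Ω := Set.inter_subset_left
    have hmono : ∫ t in Ω ∩ Metric.closedBall x h, psih ψ h (x - t) ∂μ ≤ D := by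
      apply setIntegral_mono_set hpint.integrableOn
        (Filter.Eventually.of_forall fun t => hpnn _)
        (HasSubset.Subset.eventuallyLE hsub)
    refine le_trans ?_ hmono
    have hlow : ∀ t ∈ Ω ∩ Metric.closedBall x h, Cψ * (h ^ d)⁻¹ ≤ psih ψ h (x - t) := by
      rintro t ⟨-, ht⟩
      rw [Metric.mem_closedBall, dist_comm] at ht
      unfold psih
      rw [mul_comm]
      apply mul_le_mul_of_nonneg_left _ (by positivity)
      apply hψlb
      rw [norm_smul, Real.norm_eq_abs, abs_of_nonneg (by positivity : (0:ℝ) ≤ h⁻¹)]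
      rw [← dist_eq_norm]
      calc h⁻¹ * dist x t ≤ h⁻¹ * h := by
            apply mul_le_mul_of_nonneg_left ht (by positivity)
        _ = 1 := inv_mul_cancel₀ hh0.ne'
    have hconst : ∫ t in Ω ∩ Metric.closedBall x h, (Cψ * (h ^ d)⁻¹) ∂μ ≤
        ∫ t in Ω ∩ Metric.closedBall x h, psih ψ h (x - t) ∂μ := by
      apply setIntegral_mono_on (integrableOn_const (measure_lt_top μ _).ne)
        (hpint.integrableOn) (hΩm.inter Metric.isClosed_closedBall.measurableSet) hlow
    refine le_trans ?_ hconst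
    rw [setIntegral_const, smul_eq_mul]
    have hμB : ENNReal.ofReal (C₁ * (h ^ d * vB)) ≤ μ (Ω ∩ Metric.closedBall x h) := by
      have := hA1 x hx h hh0 hh1.le
      refine le_trans (le_of_eq ?_) this
      rw [Measure.addHaar_closedBall' _ _ hh0.le, finrank_euclideanSpace_fin]
      rw [ENNReal.ofReal_mul hC₁.le, ENNReal.ofReal_mul (by positivity)]
      congr 1
      congr 1
      rw [hvB, ENNReal.ofReal_toReal measure_closedBall_lt_top.ne]
    have htr : C₁ * (h ^ d * vB) ≤ (μ (Ω ∩ Metric.closedBall x h)).toReal := by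
      rw [← ENNReal.toReal_ofReal (show (0:ℝ) ≤ C₁ * (h ^ d * vB) by positivity)]
      exact ENNReal.toReal_mono (measure_ne_top μ _) hμB
    calc c₀ = (C₁ * (h ^ d * vB)) * (Cψ * (h ^ d)⁻¹) := by
          rw [hc₀def]; field_simp
      _ ≤ (μ (Ω ∩ Metric.closedBall x h)).toReal * (Cψ * (h ^ d)⁻¹) := by
          apply mul_le_mul_of_nonneg_right htr (by positivity)
  have hDpos : 0 < D := lt_of_lt_of_le hc₀pos hDlb
  -- numerator manipulation
  obtain ⟨Cf, hCf⟩ := hΩcpt.exists_bound_of_continuousOn hf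
  have hfpint : IntegrableOn (fun y => f y * psih ψ h (x - y)) Ω μ := by
    apply ContinuousOn.integrableOn_compact hΩcpt
    exact hf.mul hpcont.continuousOn
  set N : ℝ := ∫ y in Ω, f y * psih ψ h (x - y) ∂μ with hNdef
  have hsplit : f x * D - N = ∫ y in Ω, (f x - f y) * psih ψ h (x - y) ∂μ := by
    rw [hNdef, hDdef]
    rw [← integral_const_mul (f x)]
    rw [← integral_sub (hpint.integrableOn.const_mul (f x)) hfpint]
    congr 1; funext y; ring
  -- moment integral over μ
  set E : ℝ := ∫ y in Ω, ‖x - y‖ * psih ψ h (x - y) ∂μ with hEdef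
  have hmomint : IntegrableOn (fun y => ‖x - y‖ * psih ψ h (x - y)) Ω μ := by
    apply ContinuousOn.integrableOn_compact hΩcpt
    apply ContinuousOn.mul _ hpcont.continuousOn
    fun_prop
  -- comparison with volume integrals
  have hmain : ∀ g : EuclideanSpace ℝ (Fin d) → ℝ, Continuous g → (∀ y, 0 ≤ g y) →
      Integrable g volume → ∫ y in Ω, g y ∂μ ≤ K * ∫ y, g y := by
    intro g hg hgnn hgint
    have : ∫ y in Ω, g y ∂μ = ∫ y in Ω, g y ∂μs := by
      rw [← hμsres, Measure.restrict_restrict hΩm, Set.inter_self]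
    rw [this]
    exact integral_restrict_le_smul_volume hΩm μs hKnn hdom g hg hgnn hgint
  have hDub : D ≤ K := by
    have := hmain (fun y => psih ψ h (x - y)) hpcont (fun y => hpnn _) hker.1
    rw [hker.2, mul_one] at this
    exact this
  have hEub : E ≤ K * (h * Mψ) := by
    have := hmain (fun y => ‖x - y‖ * psih ψ h (x - y))
      (by fun_prop) (fun y => mul_nonneg (norm_nonneg _) (hpnn _)) hmom.1
    rw [hmom.2] at this
    exact this
  -- pointwise bound and integration
  have hEnn : 0 ≤ E := by
    rw [hEdef]
    apply setIntegral_nonneg hΩm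
    intro y _
    exact mul_nonneg (norm_nonneg _) (hpnn _)
  have hnum : |f x * D - N| ≤ modulus Ω f h * (K * (1 + Mψ)) := by
    rw [hsplit]
    have habs : |∫ y in Ω, (f x - f y) * psih ψ h (x - y) ∂μ| ≤
        ∫ y in Ω, |f x - f y| * psih ψ h (x - y) ∂μ := by
      have := norm_integral_le_integral_norm (μ := μ.restrict Ω)
        (f := fun y => (f x - f y) * psih ψ h (x - y))
      rw [Real.norm_eq_abs] at this
      refine le_trans this (le_of_eq ?_)
      congr 1; funext y
      rw [Real.norm_eq_abs, abs_mul, abs_of_nonneg (hpnn _)]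
    refine habs.trans ?_
    have hptbd : ∀ y ∈ Ω, |f x - f y| * psih ψ h (x - y) ≤
        (1 + ‖x - y‖ / h) * modulus Ω f h * psih ψ h (x - y) := by
      intro y hy
      apply mul_le_mul_of_nonneg_right _ (hpnn _)
      have := modulus_chain hΩcpt hΩconv hf hx hy hh0
      rw [dist_eq_norm] at this
      exact this
    have hrint : IntegrableOn
        (fun y => (1 + ‖x - y‖ / h) * modulus Ω f h * psih ψ h (x - y)) Ω μ := by
      apply ContinuousOn.integrableOn_compact hΩcpt
      apply ContinuousOn.mul _ hpcont.continuousOn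
      apply ContinuousOn.mul _ continuousOn_const
      fun_prop
    have hlint : IntegrableOn (fun y => |f x - f y| * psih ψ h (x - y)) Ω μ := by
      apply ContinuousOn.integrableOn_compact hΩcpt
      apply ContinuousOn.mul _ hpcont.continuousOn
      exact (continuousOn_const.sub hf).abs
    have hstep := setIntegral_mono_on hlint hrint hΩm hptbd
    refine hstep.trans ?_
    have hsplit2 : ∫ y in Ω, (1 + ‖x - y‖ / h) * modulus Ω f h * psih ψ h (x - y) ∂μ
        = modulus Ω f h * (D + h⁻¹ * E) := by
      have e : ∀ y : EuclideanSpace ℝ (Fin d),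
          (1 + ‖x - y‖ / h) * modulus Ω f h * psih ψ h (x - y)
          = modulus Ω f h * (psih ψ h (x - y) + h⁻¹ * (‖x - y‖ * psih ψ h (x - y))) := by
        intro y; field_simp
      rw [show (fun y => (1 + ‖x - y‖ / h) * modulus Ω f h * psih ψ h (x - y))
          = fun y => modulus Ω f h *
            (psih ψ h (x - y) + h⁻¹ * (‖x - y‖ * psih ψ h (x - y))) from funext e]
      rw [integral_const_mul]
      congr 1
      rw [integral_add hpint.integrableOn (hmomint.const_mul _)]
      rw [integral_const_mul]
    rw [hsplit2]
    apply mul_le_mul_of_nonneg_left _ hω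
    calc D + h⁻¹ * E ≤ K + h⁻¹ * (K * (h * Mψ)) := by
          apply add_le_add hDub
          apply mul_le_mul_of_nonneg_left hEub (by positivity)
      _ = K * (1 + Mψ) := by field_simp
  -- conclusion
  have hfrac : f x - N / D = (f x * D - N) / D := by
    field_simp
  rw [hfrac, abs_div, abs_of_pos hDpos]
  calc |f x * D - N| / D ≤ (modulus Ω f h * (K * (1 + Mψ))) / c₀ := by
        apply div_le_div₀ (by positivity) hnum hc₀pos hDlb
    _ ≤ (K * (1 + Mψ) + 1) / c₀ * modulus Ω f h := by
        rw [div_mul_eq_mul_div]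
        apply div_le_div₀ (by positivity) (by nlinarith [hω]) hc₀pos le_rfl
end

section
/- There exists a constant C > 0, depending only on d, Ω, μ, ψ and ‖f‖_∞, such that for every 1 ≤ p ≤ 2, every 0 < h < 1 and every N ≥ 1: E‖Q_h f − E[Q_h f]‖_p ≤ C N^{−1/2} h^{−d/2}. (Paper's Lemma 3.5.) -/
open MeasureTheory ProbabilityTheory Real
open scoped ENNReal

lemma psih_int {d : ℕ} {ψ : EuclideanSpace ℝ (Fin d) → ℝ}
    (hψi : Integrable ψ volume) {h : ℝ} (hh : 0 < h) :
    Integrable (psih ψ h) volume ∧ ∫ x, psih ψ h x = ∫ x, ψ x := by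
  have hfr : Module.finrank ℝ (EuclideanSpace ℝ (Fin d)) = d := finrank_euclideanSpace_fin
  have h1 : Integrable (fun x : EuclideanSpace ℝ (Fin d) => ψ (h⁻¹ • x)) volume := by
    rw [integrable_comp_smul_iff volume ψ (inv_ne_zero hh.ne')]
    exact hψi
  constructor
  · exact h1.const_mul _
  · unfold psih
    rw [integral_const_mul, MeasureTheory.Measure.integral_comp_smul volume ψ h⁻¹, hfr]
    rw [inv_pow, inv_inv, abs_of_nonneg (pow_nonneg hh.le _), smul_eq_mul]
    field_simp

lemma lint_psih_shift {d : ℕ} {ψ : EuclideanSpace ℝ (Fin d) → ℝ}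
    (hψi : Integrable ψ volume) (hψ1 : ∫ x, ψ x = 1) (hψ0 : ∀ x, 0 ≤ ψ x)
    {h : ℝ} (hh : 0 < h) (y : EuclideanSpace ℝ (Fin d)) :
    ∫⁻ x, ENNReal.ofReal (psih ψ h (x - y)) = 1 := by
  rw [lintegral_sub_right_eq_self (fun x => ENNReal.ofReal (psih ψ h x)) y]
  obtain ⟨hint, hval⟩ := psih_int hψi hh
  rw [← ofReal_integral_eq_lintegral_ofReal hint]
  · rw [hval, hψ1, ENNReal.ofReal_one]
  · exact Filter.Eventually.of_forall fun x =>
      mul_nonneg (inv_nonneg.2 (pow_nonneg hh.le _)) (hψ0 _)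

lemma lint_cauchy_schwarz {Θ : Type*} [MeasurableSpace Θ] (P : Measure Θ)
    [IsProbabilityMeasure P] {G : Θ → ℝ≥0∞} (hG : Measurable G) :
    ∫⁻ θ, (G θ) ^ (2:ℝ)⁻¹ ∂P ≤ (∫⁻ θ, G θ ∂P) ^ (2:ℝ)⁻¹ := by
  have hconj : Real.HolderConjugate 2 2 := by
    constructor <;> norm_num
  have := ENNReal.lintegral_mul_le_Lp_mul_Lq P hconj
    (f := fun θ => (G θ) ^ (2:ℝ)⁻¹) (g := fun _ => 1)
    (hG.pow_const _).aemeasurable aemeasurable_const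
  have h2 : ∀ a:ℝ≥0∞, (a ^ (2:ℝ)⁻¹) ^ (2:ℝ) = a := fun a => by
    rw [← ENNReal.rpow_mul]; norm_num
  simp only [Pi.mul_apply, mul_one, ENNReal.one_rpow, lintegral_one, measure_univ,
    h2, one_div, ENNReal.rpow_natCast] at this
  exact this

lemma var_bound {d : ℕ} {Θ : Type} [MeasurableSpace Θ] {P : Measure Θ} [IsProbabilityMeasure P]
    {μ : Measure (EuclideanSpace ℝ (Fin d))} [IsProbabilityMeasure μ]
    {φ ρ : EuclideanSpace ℝ (Fin d) → ℝ} (hφ : Continuous φ)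
    {A : ℝ} (hφbd : ∀ y, |φ y| ≤ A)
    (hρ : Integrable ρ μ) (hφρ : ∀ y, φ y ^ 2 ≤ ρ y)
    {N : ℕ} (hN : 1 ≤ N) {X : Fin N → Θ → EuclideanSpace ℝ (Fin d)}
    (hXm : ∀ j, Measurable (X j)) (hXlaw : ∀ j, Measure.map (X j) P = μ)
    (hXind : iIndepFun X P) :
    ∫⁻ θ, (‖(N:ℝ)⁻¹ * ∑ j, φ (X j θ) - ∫ y, φ y ∂μ‖₊ : ℝ≥0∞) ^ 2 ∂P ≤
      ENNReal.ofReal ((N:ℝ)⁻¹ * ∫ y, ρ y ∂μ) := by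
  set Y : Fin N → Θ → ℝ := fun j θ => φ (X j θ) with hY
  have hYm : ∀ j, Measurable (Y j) := fun j => hφ.measurable.comp (hXm j)
  have hYbd : ∀ j θ, |Y j θ| ≤ A := fun j θ => hφbd _
  have hYmem : ∀ j, MemLp (Y j) 2 P := fun j =>
    MemLp.of_bound (hYm j).aestronglyMeasurable A
      (Filter.Eventually.of_forall fun θ => by
        simpa [Real.norm_eq_abs] using hYbd j θ)
  have hYint : ∀ j, ∫ θ, Y j θ ∂P = ∫ y, φ y ∂μ := fun j => by
    rw [← hXlaw j, integral_map (hXm j).aemeasurable hφ.aestronglyMeasurable]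
  set S : Θ → ℝ := fun θ => (N:ℝ)⁻¹ * ∑ j, Y j θ with hS
  have hSeq : S = (N:ℝ)⁻¹ • ∑ j, Y j := by
    funext θ; simp [hS, Finset.sum_apply]
  have hSmem : MemLp S 2 P := by
    rw [hSeq]; exact (memLp_finset_sum' _ fun j _ => hYmem j).const_smul _
  have hSE : ∫ θ, S θ ∂P = ∫ y, φ y ∂μ := by
    rw [hS]
    simp only [integral_const_mul]
    rw [integral_finset_sum _ fun j _ => (hYmem j).integrable one_le_two]
    simp only [hYint, Finset.sum_const, Finset.card_univ, Fintype.card_fin, nsmul_eq_mul]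
    field_simp
  have hkey : ∫⁻ θ, (‖(N:ℝ)⁻¹ * ∑ j, φ (X j θ) - ∫ y, φ y ∂μ‖₊ : ℝ≥0∞) ^ 2 ∂P
      = evariance S P := by
    rw [evariance]
    congr 1
    funext θ
    rw [hSE]
    rfl
  rw [hkey, ← hSmem.ofReal_variance_eq]
  apply ENNReal.ofReal_le_ofReal
  have hvS : variance S P = ((N:ℝ)⁻¹)^2 * variance (∑ j, Y j) P := by
    rw [hSeq, variance_smul]
  have hpair : Set.Pairwise ↑(Finset.univ : Finset (Fin N))
      fun i j => IndepFun (Y i) (Y j) P := by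
    intro i _ j _ hij
    exact (hXind.comp (fun _ => φ) fun _ => hφ.measurable).indepFun hij
  have hvsum : variance (∑ j, Y j) P = ∑ j, variance (Y j) P :=
    IndepFun.variance_sum (fun j _ => hYmem j) hpair
  have hφsqint : Integrable (fun y => φ y ^ 2) μ := by
    refine (integrable_const (A^2)).mono' ((hφ.mul hφ).aestronglyMeasurable.congr ?_) ?_
    · exact Filter.Eventually.of_forall fun y => by rw [Pi.mul_apply]; ring
    · exact Filter.Eventually.of_forall fun y => by
        rw [Real.norm_eq_abs, abs_pow]
        exact pow_le_pow_left₀ (abs_nonneg _) (hφbd y) 2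
  have hvj : ∀ j : Fin N, variance (Y j) P ≤ ∫ y, ρ y ∂μ := by
    intro j
    refine (variance_le_expectation_sq (hYm j).aestronglyMeasurable).trans ?_
    have : ∫ θ, (Y j θ) ^ 2 ∂P = ∫ y, φ y ^ 2 ∂μ := by
      rw [← hXlaw j, integral_map (hXm j).aemeasurable]
      exact (hφ.mul hφ).aestronglyMeasurable.congr
        (Filter.Eventually.of_forall fun y => by rw [Pi.mul_apply]; ring)
    calc ∫ θ, ((Y j) ^ 2) θ ∂P = ∫ y, φ y ^ 2 ∂μ := by
          simpa [Pi.pow_apply] using this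
      _ ≤ ∫ y, ρ y ∂μ := integral_mono hφsqint hρ fun y => hφρ y
  calc variance S P = ((N:ℝ)⁻¹)^2 * ∑ j, variance (Y j) P := by rw [hvS, hvsum]
    _ ≤ ((N:ℝ)⁻¹)^2 * (N * ∫ y, ρ y ∂μ) := by
        apply mul_le_mul_of_nonneg_left _ (sq_nonneg _)
        calc ∑ j : Fin N, variance (Y j) P ≤ ∑ _j : Fin N, ∫ y, ρ y ∂μ :=
              Finset.sum_le_sum fun j _ => hvj j
          _ = N * ∫ y, ρ y ∂μ := by simp [Finset.sum_const, nsmul_eq_mul]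
    _ = (N:ℝ)⁻¹ * ∫ y, ρ y ∂μ := by
        have : (N:ℝ) ≠ 0 := Nat.cast_ne_zero.2 (by omega)
        field_simp


/-- Paper's Lemma 3.5: there is `C > 0` depending only on
`d, Ω, μ, ψ, ‖f‖_∞` such that for every `1 ≤ p ≤ 2`, `0 < h < 1` and `N ≥ 1`,
`E‖Q_h f − E[Q_h f]‖_p ≤ C N^{−1/2} h^{−d/2}`. -/
theorem stmt_13
    (d : ℕ) (hd : 1 ≤ d)
    (Ω : Set (EuclideanSpace ℝ (Fin d)))
    (hΩcpt : IsCompact Ω) (hΩconv : Convex ℝ Ω) (hΩint : (interior Ω).Nonempty)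
    (μ : Measure (EuclideanSpace ℝ (Fin d))) [IsProbabilityMeasure μ]
    (hμΩ : μ Ωᶜ = 0)
    (hA2 : ∃ μs : Measure (EuclideanSpace ℝ (Fin d)),
      IsFiniteMeasure μs ∧ μs.restrict Ω = μ ∧ FourierL1 μs)
    (ψ : EuclideanSpace ℝ (Fin d) → ℝ)
    (hψcont : Continuous ψ) (hψbdd : ∃ M, ∀ x, ψ x ≤ M) (hψpos : ∀ x, 0 ≤ ψ x)
    (hψint : ∫ x, ψ x = 1)
    (hψmom : Integrable (fun x : EuclideanSpace ℝ (Fin d) => ‖x‖ * ψ x) volume)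
    (f : EuclideanSpace ℝ (Fin d) → ℝ) (hf : ContinuousOn f Ω)
    (Θ : Type) [MeasurableSpace Θ] (P : Measure Θ) [IsProbabilityMeasure P] :
    ∃ C > 0, ∀ p : ℝ≥0∞, 1 ≤ p → p ≤ 2 → ∀ h : ℝ, 0 < h → h < 1 → ∀ N : ℕ, 1 ≤ N →
      ∀ X : Fin N → Θ → EuclideanSpace ℝ (Fin d),
        (∀ j, Measurable (X j)) → (∀ j, Measure.map (X j) P = μ) →
        iIndepFun X P →
      ∫⁻ θ, eLpNorm (fun x =>
            (N : ℝ)⁻¹ * ∑ j, f (X j θ) * psih ψ h (x - X j θ) -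
            ∫ y in Ω, f y * psih ψ h (x - y) ∂μ)
          p (volume.restrict Ω) ∂P ≤
        ENNReal.ofReal (C * (Real.sqrt N)⁻¹ * (Real.sqrt (h ^ d))⁻¹) := by
  classical
  have hΩmeas : MeasurableSet Ω := hΩcpt.isClosed.measurableSet
  have hrestrict : μ.restrict Ω = μ := by
    apply Measure.restrict_eq_self_of_ae_mem
    rw [Filter.eventually_iff, mem_ae_iff]
    simpa using hμΩ
  -- bound on f and continuous bounded extension F
  obtain ⟨Mf, hMf⟩ := hΩcpt.exists_bound_of_continuousOn hf
  set M : ℝ := max Mf 0 with hMdef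
  have hM0 : 0 ≤ M := le_max_right _ _
  obtain ⟨F0, hF0⟩ := ContinuousMap.exists_restrict_eq (Y := ℝ) hΩcpt.isClosed
    ⟨Ω.restrict f, hf.restrict⟩
  have hF0eq : ∀ x (hx : x ∈ Ω), F0 x = f x := fun x hx =>
    congrFun (congrArg DFunLike.coe hF0) (⟨x, hx⟩ : Ω)
  set F : EuclideanSpace ℝ (Fin d) → ℝ := fun x => max (-M) (min M (F0 x)) with hFdef
  have hFcont : Continuous F := continuous_const.max (continuous_const.min F0.continuous)
  have hFbd : ∀ x, |F x| ≤ M := by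
    intro x
    rw [abs_le]
    exact ⟨le_max_left _ _, max_le (by linarith) (min_le_left _ _)⟩
  have hFf : ∀ x ∈ Ω, F x = f x := by
    intro x hx
    have h1 : |f x| ≤ M := (hMf x hx).trans (le_max_left _ _)
    rw [hFdef]
    simp only
    rw [hF0eq x hx, min_eq_right (abs_le.1 h1).2, max_eq_right (abs_le.1 h1).1]
  -- bound on ψ
  obtain ⟨Mψ, hMψ⟩ := hψbdd
  set B : ℝ := max Mψ 1 with hBdef
  have hB1 : 1 ≤ B := le_max_right _ _
  have hB0 : 0 < B := lt_of_lt_of_le one_pos hB1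
  have hψB : ∀ x, ψ x ≤ B := fun x => (hMψ x).trans (le_max_left _ _)
  have hψInt : Integrable ψ volume := by
    by_contra hc
    rw [integral_undef hc] at hψint
    exact one_ne_zero hψint.symm
  -- constants
  set c₁ : ℝ := max 1 (volume Ω).toReal with hc₁def
  have hc₁1 : 1 ≤ c₁ := le_max_left _ _
  set c₀ : ℝ≥0∞ := ENNReal.ofReal c₁ with hc₀def
  have hc₀top : c₀ ≠ ⊤ := ENNReal.ofReal_ne_top
  have hc₀1 : 1 ≤ c₀ := by
    rw [hc₀def, ← ENNReal.ofReal_one]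
    exact ENNReal.ofReal_le_ofReal hc₁1
  have hc₀Ω : volume Ω ≤ c₀ := by
    have h1 : volume Ω ≠ ⊤ := hΩcpt.measure_lt_top.ne
    calc volume Ω = ENNReal.ofReal (volume Ω).toReal := (ENNReal.ofReal_toReal h1).symm
      _ ≤ c₀ := ENNReal.ofReal_le_ofReal (le_max_right _ _)
  refine ⟨c₁ * ((M + 1) * Real.sqrt B), by positivity, ?_⟩
  intro p hp1 hp2 h hh0 hh1 N hN X hXm hXlaw hXind
  have hhd : (0:ℝ) < h ^ d := pow_pos hh0 d
  set ψh : EuclideanSpace ℝ (Fin d) → ℝ := psih ψ h with hψhdef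
  have hψhcont : Continuous ψh := by
    exact continuous_const.mul (hψcont.comp (continuous_const_smul h⁻¹))
  have hψh0 : ∀ x, 0 ≤ ψh x := fun x =>
    mul_nonneg (inv_nonneg.2 hhd.le) (hψpos _)
  have hψhB : ∀ x, ψh x ≤ (h ^ d)⁻¹ * B := fun x =>
    mul_le_mul_of_nonneg_left (hψB _) (inv_nonneg.2 hhd.le)
  have hψhabs : ∀ x, |ψh x| ≤ (h ^ d)⁻¹ * B := fun x => by
    rw [abs_of_nonneg (hψh0 x)]; exact hψhB x
  set K : ℝ := M ^ 2 * ((h ^ d)⁻¹ * B) with hKdef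
  -- the mean function
  set m' : EuclideanSpace ℝ (Fin d) → ℝ := fun x => ∫ y, F y * ψh (x - y) ∂μ with hm'def
  have hφcont : ∀ x : EuclideanSpace ℝ (Fin d),
      Continuous (fun y => F y * ψh (x - y)) := fun x =>
    hFcont.mul (hψhcont.comp (continuous_const.sub continuous_id))
  have hφbd : ∀ x y : EuclideanSpace ℝ (Fin d),
      |F y * ψh (x - y)| ≤ M * ((h ^ d)⁻¹ * B) := by
    intro x y
    rw [abs_mul]
    exact mul_le_mul (hFbd y) (hψhabs _) (abs_nonneg _) hM0
  have hm'cont : Continuous m' := by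
    apply continuous_of_dominated
      (F := fun x y => F y * ψh (x - y)) (bound := fun _ => M * ((h ^ d)⁻¹ * B))
    · exact fun x => (hφcont x).aestronglyMeasurable
    · exact fun x => Filter.Eventually.of_forall fun y => by
        rw [Real.norm_eq_abs]; exact hφbd x y
    · exact integrable_const _
    · exact Filter.Eventually.of_forall fun y =>
        continuous_const.mul (hψhcont.comp (continuous_id.sub continuous_const))
  have hmm : ∀ x, (∫ y in Ω, f y * psih ψ h (x - y) ∂μ) = m' x := by
    intro x
    rw [hm'def]
    have h1 : ∫ y in Ω, f y * psih ψ h (x - y) ∂μ = ∫ y in Ω, F y * ψh (x - y) ∂μ :=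
      setIntegral_congr_fun hΩmeas (fun y hy => by rw [hFf y hy])
    rw [h1, hrestrict]
  -- the continuous version of the empirical deviation
  set ν : Measure (EuclideanSpace ℝ (Fin d)) := volume.restrict Ω with hνdef
  set D' : Θ → EuclideanSpace ℝ (Fin d) → ℝ := fun θ x =>
    (N:ℝ)⁻¹ * ∑ j, F (X j θ) * ψh (x - X j θ) - m' x with hD'def
  set Dθ : Θ → EuclideanSpace ℝ (Fin d) → ℝ := fun θ x =>
    (N : ℝ)⁻¹ * ∑ j, f (X j θ) * ψh (x - X j θ) -
      ∫ y in Ω, f y * ψh (x - y) ∂μ with hDθdef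
  have hpairmeas : Measurable (fun q : Θ × EuclideanSpace ℝ (Fin d) => D' q.1 q.2) := by
    apply Measurable.sub
    · apply Measurable.const_mul
      apply Finset.measurable_sum
      intro j _
      exact (hFcont.measurable.comp ((hXm j).comp measurable_fst)).mul
        (hψhcont.measurable.comp (measurable_snd.sub ((hXm j).comp measurable_fst)))
    · exact hm'cont.measurable.comp measurable_snd
  set G : Θ → ℝ≥0∞ := fun θ => ∫⁻ x, (‖D' θ x‖₊ : ℝ≥0∞) ^ 2 ∂ν with hGdef
  have hsqmeas : Measurable
      (fun q : Θ × EuclideanSpace ℝ (Fin d) => (‖D' q.1 q.2‖₊ : ℝ≥0∞) ^ 2) :=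
    (hpairmeas.nnnorm.coe_nnreal_ennreal).pow_const 2
  have hGmeas : Measurable G := Measurable.lintegral_prod_right' hsqmeas
  have hrpow2 : ∀ a : ℝ≥0∞, a ^ (2:ℝ) = a ^ (2:ℕ) := fun a => by
    rw [← ENNReal.rpow_natCast]; norm_num
  -- continuity of Dθ for each θ
  have hDcont : ∀ θ, Continuous (Dθ θ) := by
    intro θ
    apply Continuous.sub
    · apply continuous_const.mul
      exact continuous_finset_sum _ fun j _ =>
        continuous_const.mul (hψhcont.comp (continuous_id.sub continuous_const))
    · have : (fun x => ∫ y in Ω, f y * ψh (x - y) ∂μ) = m' := funext hmm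
      rw [this]; exact hm'cont
  -- exponent arithmetic
  have hptop : p ≠ ⊤ := fun hp => by
    rw [hp, top_le_iff] at hp2
    exact ENNReal.ofNat_ne_top hp2
  have hpt1 : 1 ≤ p.toReal := by
    rw [← ENNReal.toReal_one]
    exact ENNReal.toReal_mono hptop hp1
  have hexp : 0 ≤ 1 / p.toReal - 1 / (2:ℝ≥0∞).toReal ∧
      1 / p.toReal - 1 / (2:ℝ≥0∞).toReal ≤ 1 := by
    have hpt2 : p.toReal ≤ 2 := by
      have := ENNReal.toReal_mono ENNReal.ofNat_ne_top hp2
      simpa using this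
    have h1p : 1 / p.toReal ≤ 1 := by
      rw [div_le_one (by linarith)]; linarith
    have h2p : (1:ℝ)/2 ≤ 1/p.toReal := by
      apply one_div_le_one_div_of_le (by linarith) hpt2
    rw [ENNReal.toReal_ofNat]
    constructor <;> linarith
  have hrpow_le : (ν Set.univ) ^ (1 / p.toReal - 1 / (2:ℝ≥0∞).toReal) ≤ c₀ := by
    have hν : ν Set.univ = volume Ω := by rw [hνdef, Measure.restrict_apply_univ]
    rw [hν]
    rcases le_total (volume Ω) 1 with hle | hle
    · exact (ENNReal.rpow_le_one hle hexp.1).trans hc₀1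
    · calc (volume Ω) ^ (1 / p.toReal - 1/(2:ℝ≥0∞).toReal)
          ≤ (volume Ω) ^ (1:ℝ) := ENNReal.rpow_le_rpow_of_exponent_le hle hexp.2
        _ = volume Ω := ENNReal.rpow_one _
        _ ≤ c₀ := hc₀Ω
  have stepA : ∀ θ, eLpNorm (Dθ θ) p ν ≤ eLpNorm (Dθ θ) 2 ν * c₀ := fun θ =>
    (eLpNorm_le_eLpNorm_mul_rpow_measure_univ hp2
      (hDcont θ).aestronglyMeasurable).trans (mul_le_mul_right hrpow_le _)
  -- a.e. the sample points are in Ω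
  have hae : ∀ᵐ θ ∂P, ∀ j, X j θ ∈ Ω := by
    rw [ae_all_iff]
    intro j
    have h0 : P (X j ⁻¹' Ωᶜ) = 0 := by
      rw [← Measure.map_apply (hXm j) hΩmeas.compl, hXlaw j]; exact hμΩ
    rw [ae_iff]
    exact h0
  have haeD : ∀ᵐ θ ∂P, eLpNorm (Dθ θ) 2 ν = G θ ^ (2:ℝ)⁻¹ := by
    filter_upwards [hae] with θ hθ
    have hDeq : Dθ θ = D' θ := by
      funext x
      rw [hDθdef, hD'def]
      simp only
      rw [hmm x]
      congr 2
      apply Finset.sum_congr rfl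
      intro j _
      rw [hFf _ (hθ j)]
    rw [hDeq, eLpNorm_eq_lintegral_rpow_enorm_toReal two_ne_zero ENNReal.ofNat_ne_top, hGdef]
    simp only [ENNReal.toReal_ofNat, one_div]
    congr 1
    apply lintegral_congr
    intro x
    rw [hrpow2, enorm_eq_nnnorm]
  -- the variance bound, for each x
  have hK0 : 0 ≤ K := by
    rw [hKdef]; positivity
  have hx : ∀ x, (∫⁻ θ, (‖D' θ x‖₊ : ℝ≥0∞) ^ 2 ∂P) ≤
      ENNReal.ofReal ((N:ℝ)⁻¹ * (K * ∫ y, ψh (x - y) ∂μ)) := by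
    intro x
    have hψhint : Integrable (fun y => ψh (x - y)) μ := by
      refine (integrable_const ((h^d)⁻¹ * B)).mono'
        ((hψhcont.comp (continuous_const.sub continuous_id)).aestronglyMeasurable) ?_
      exact Filter.Eventually.of_forall fun y => by
        rw [Real.norm_eq_abs]; exact hψhabs _
    have hb := var_bound (P := P) (μ := μ)
      (φ := fun y => F y * ψh (x - y)) (ρ := fun y => K * ψh (x - y))
      (hφcont x) (A := M * ((h^d)⁻¹ * B)) (fun y => hφbd x y)
      (hψhint.const_mul K) ?_ hN hXm hXlaw hXind
    · calc ∫⁻ θ, (‖D' θ x‖₊ : ℝ≥0∞) ^ 2 ∂P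
          = ∫⁻ θ, (‖(N:ℝ)⁻¹ * ∑ j, F (X j θ) * ψh (x - X j θ) -
              ∫ y, F y * ψh (x - y) ∂μ‖₊ : ℝ≥0∞) ^ 2 ∂P := rfl
        _ ≤ ENNReal.ofReal ((N:ℝ)⁻¹ * ∫ y, K * ψh (x - y) ∂μ) := hb
        _ = ENNReal.ofReal ((N:ℝ)⁻¹ * (K * ∫ y, ψh (x - y) ∂μ)) := by
            rw [integral_const_mul]
    · intro y
      have h1 : F y ^ 2 ≤ M ^ 2 := by
        rw [← sq_abs]
        exact pow_le_pow_left₀ (abs_nonneg _) (hFbd y) 2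
      have h2 : 0 ≤ ψh (x - y) := hψh0 _
      have h3 : ψh (x - y) ≤ (h^d)⁻¹ * B := hψhB _
      calc (F y * ψh (x - y)) ^ 2 = F y ^ 2 * (ψh (x - y) * ψh (x - y)) := by ring
        _ ≤ M ^ 2 * (ψh (x - y) * ψh (x - y)) :=
            mul_le_mul_of_nonneg_right h1 (mul_self_nonneg _)
        _ ≤ M ^ 2 * (((h^d)⁻¹ * B) * ψh (x - y)) :=
            mul_le_mul_of_nonneg_left (mul_le_mul_of_nonneg_right h3 h2) (sq_nonneg M)
        _ = K * ψh (x - y) := by rw [hKdef]; ring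
  -- total mass bound
  have hr1 : ∫⁻ x, ENNReal.ofReal (∫ y, ψh (x - y) ∂μ) ∂ν ≤ 1 := by
    have hψhint : ∀ x, Integrable (fun y => ψh (x - y)) μ := by
      intro x
      refine (integrable_const ((h^d)⁻¹ * B)).mono'
        ((hψhcont.comp (continuous_const.sub continuous_id)).aestronglyMeasurable) ?_
      exact Filter.Eventually.of_forall fun y => by
        rw [Real.norm_eq_abs]; exact hψhabs _
    have hswapmeas : AEMeasurable
        (fun q : EuclideanSpace ℝ (Fin d) × EuclideanSpace ℝ (Fin d) =>
          ENNReal.ofReal (ψh (q.1 - q.2))) (volume.prod μ) :=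
      ((ENNReal.continuous_ofReal.comp
        (hψhcont.comp (continuous_fst.sub continuous_snd))).measurable).aemeasurable
    calc ∫⁻ x, ENNReal.ofReal (∫ y, ψh (x - y) ∂μ) ∂ν
        ≤ ∫⁻ x, ENNReal.ofReal (∫ y, ψh (x - y) ∂μ) ∂volume :=
          lintegral_mono' Measure.restrict_le_self le_rfl
      _ = ∫⁻ x, ∫⁻ y, ENNReal.ofReal (ψh (x - y)) ∂μ ∂volume := by
          apply lintegral_congr
          intro x
          exact ofReal_integral_eq_lintegral_ofReal (hψhint x)
            (Filter.Eventually.of_forall fun y => hψh0 _)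
      _ = ∫⁻ y, ∫⁻ x, ENNReal.ofReal (ψh (x - y)) ∂volume ∂μ :=
          lintegral_lintegral_swap hswapmeas
      _ = ∫⁻ y, 1 ∂μ := by
          apply lintegral_congr
          intro y
          exact lint_psih_shift hψInt hψint hψpos hh0 y
      _ = 1 := by simp
  have hGbound : ∫⁻ θ, G θ ∂P ≤ ENNReal.ofReal ((N:ℝ)⁻¹ * K) := by
    have hswap : ∫⁻ θ, G θ ∂P = ∫⁻ x, (∫⁻ θ, (‖D' θ x‖₊ : ℝ≥0∞) ^ 2 ∂P) ∂ν :=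
      lintegral_lintegral_swap hsqmeas.aemeasurable
    rw [hswap]
    have hNK0 : 0 ≤ (N:ℝ)⁻¹ * K := mul_nonneg (by positivity) hK0
    calc ∫⁻ x, (∫⁻ θ, (‖D' θ x‖₊ : ℝ≥0∞) ^ 2 ∂P) ∂ν
        ≤ ∫⁻ x, ENNReal.ofReal ((N:ℝ)⁻¹ * (K * ∫ y, ψh (x - y) ∂μ)) ∂ν :=
          lintegral_mono hx
      _ = ∫⁻ x, ENNReal.ofReal ((N:ℝ)⁻¹ * K) *
            ENNReal.ofReal (∫ y, ψh (x - y) ∂μ) ∂ν := by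
          apply lintegral_congr
          intro x
          rw [show (N:ℝ)⁻¹ * (K * ∫ y, ψh (x - y) ∂μ) =
            ((N:ℝ)⁻¹ * K) * ∫ y, ψh (x - y) ∂μ from by ring,
            ENNReal.ofReal_mul hNK0]
      _ = ENNReal.ofReal ((N:ℝ)⁻¹ * K) *
            ∫⁻ x, ENNReal.ofReal (∫ y, ψh (x - y) ∂μ) ∂ν :=
          lintegral_const_mul' _ _ ENNReal.ofReal_ne_top
      _ ≤ ENNReal.ofReal ((N:ℝ)⁻¹ * K) * 1 := mul_le_mul_right hr1 _
      _ = ENNReal.ofReal ((N:ℝ)⁻¹ * K) := mul_one _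
  -- final arithmetic
  have hfinal : (ENNReal.ofReal ((N:ℝ)⁻¹ * K)) ^ (2:ℝ)⁻¹ * c₀ ≤
      ENNReal.ofReal (c₁ * ((M+1) * Real.sqrt B) *
        (Real.sqrt N)⁻¹ * (Real.sqrt (h^d))⁻¹) := by
    have hNK0 : 0 ≤ (N:ℝ)⁻¹ * K := mul_nonneg (by positivity) hK0
    rw [hc₀def, ENNReal.ofReal_rpow_of_nonneg hNK0 (by norm_num),
      ← ENNReal.ofReal_mul (by positivity)]
    apply ENNReal.ofReal_le_ofReal
    have hsqrtval : ((N:ℝ)⁻¹ * K) ^ ((2:ℝ)⁻¹) =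
        (Real.sqrt N)⁻¹ * (M * Real.sqrt B * (Real.sqrt (h^d))⁻¹) := by
      rw [show ((2:ℝ)⁻¹) = 1/2 from by norm_num, ← Real.sqrt_eq_rpow]
      rw [Real.sqrt_mul (by positivity), Real.sqrt_inv, hKdef,
        Real.sqrt_mul (sq_nonneg M), Real.sqrt_sq hM0,
        Real.sqrt_mul (by positivity), Real.sqrt_inv]
      ring
    rw [hsqrtval]
    have h1 : 0 ≤ (Real.sqrt (N:ℝ))⁻¹ := by positivity
    have h2 : 0 ≤ Real.sqrt B := Real.sqrt_nonneg _
    have h3 : 0 ≤ (Real.sqrt (h^d))⁻¹ := by positivity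
    have hc₁0 : 0 ≤ c₁ := by linarith
    calc (Real.sqrt N)⁻¹ * (M * Real.sqrt B * (Real.sqrt (h^d))⁻¹) * c₁
        = c₁ * (M * Real.sqrt B) * (Real.sqrt N)⁻¹ * (Real.sqrt (h^d))⁻¹ := by ring
      _ ≤ c₁ * ((M+1) * Real.sqrt B) * (Real.sqrt N)⁻¹ * (Real.sqrt (h^d))⁻¹ := by
          gcongr
          linarith
  -- put everything together
  have main : ∫⁻ θ, eLpNorm (Dθ θ) p ν ∂P ≤
      ENNReal.ofReal (c₁ * ((M+1) * Real.sqrt B) *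
        (Real.sqrt N)⁻¹ * (Real.sqrt (h^d))⁻¹) := by
    calc ∫⁻ θ, eLpNorm (Dθ θ) p ν ∂P
        ≤ ∫⁻ θ, eLpNorm (Dθ θ) 2 ν * c₀ ∂P := lintegral_mono stepA
      _ = (∫⁻ θ, eLpNorm (Dθ θ) 2 ν ∂P) * c₀ := lintegral_mul_const' c₀ _ hc₀top
      _ = (∫⁻ θ, G θ ^ (2:ℝ)⁻¹ ∂P) * c₀ := by rw [lintegral_congr_ae haeD]
      _ ≤ (∫⁻ θ, G θ ∂P) ^ (2:ℝ)⁻¹ * c₀ :=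
          mul_le_mul_left (lint_cauchy_schwarz P hGmeas) c₀
      _ ≤ (ENNReal.ofReal ((N:ℝ)⁻¹ * K)) ^ (2:ℝ)⁻¹ * c₀ :=
          mul_le_mul_left (ENNReal.rpow_le_rpow hGbound (by norm_num)) c₀
      _ ≤ _ := hfinal
  exact main
end
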